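/- Let f(z) = ∑_{k=0}^∞ a_k z^k be analytic on the open unit disk D with |f(z)| ≤ 1 for all z ∈ D, and let m, N ≥ 1 be integers. If 0 ≤ r < 1 satisfies 2r^N(1+r^m) ≤ (1-r)(1-r^m), then for every z ∈ ℂ with |z| = r one has |f(z^m)| + ∑_{k=N}^∞ |a_k| r^k ≤ 1. (In particular this holds for all r ≤ R_{m,N}, where R_{m,N} is the positive root of 2r^N(1+r^m) - (1-r)(1-r^m) = 0.) -/

import Mathlib

open Metric Filter Complex Topology


lemma myQuad (t ρ x u : ℝ) (ht0 : 0 ≤ t) (ht1 : t < 1) (hρ0 : 0 ≤ ρ) (hρ1 : ρ < 1)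
    (hx : 0 ≤ x) (hu : |u| ≤ t * x)
    (hq : x ^ 2 - 2 * u + t ^ 2 ≤ ρ ^ 2 * (1 - 2 * u + t ^ 2 * x ^ 2)) :
    x * (1 + t * ρ) ≤ t + ρ := by
  have hQ : ((1 + t*ρ) * x - (t + ρ)) * ((1 - t*ρ) * x - (t - ρ)) ≤ 0 := by
    have h1 : u ≤ t * x := (abs_le.1 hu).2
    have h2 : (1 - ρ^2) * u ≤ (1 - ρ^2) * (t * x) :=
      mul_le_mul_of_nonneg_left h1 (by nlinarith)
    nlinarith [hq, h2]
  by_contra hcon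
  push_neg at hcon
  have hf1 : 0 < (1 + t*ρ) * x - (t + ρ) := by nlinarith
  have htρ : 0 < 1 - t*ρ := by nlinarith
  have htρ' : 0 < 1 + t*ρ := by nlinarith [mul_nonneg ht0 hρ0]
  have hf2 : 0 < (1 - t*ρ) * x - (t - ρ) := by
    have h3 : (1 - t*ρ) * (t + ρ) < (1 - t*ρ) * ((1 + t*ρ) * x) :=
      mul_lt_mul_of_pos_left (by linarith [hcon] : t + ρ < (1 + t*ρ) * x) htρ
    have h4 : (t - ρ) * (1 + t*ρ) ≤ (1 - t*ρ) * (t + ρ) := by nlinarith [mul_nonneg hρ0 (mul_nonneg ht0 ht0), mul_nonneg hρ0 ht0]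
    nlinarith [h3, h4]
  nlinarith [mul_pos hf1 hf2]

lemma myAvg (f : ℂ → ℂ) (a : ℕ → ℂ)
    (hsum : ∀ z ∈ ball (0:ℂ) 1, HasSum (fun k : ℕ => a k * z ^ k) (f z))
    (s : ℝ) (hb : ∀ z ∈ ball (0:ℂ) 1, ‖f z‖ ≤ s)
    (n : ℕ) (hn : 1 ≤ n) (w : ℂ) (hw : w ∈ ball (0:ℂ) 1) :
    ∃ S : ℂ, ‖S‖ ≤ s ∧ HasSum (fun j : ℕ => a (j * n) * w ^ j) S := by
  have hn0 : n ≠ 0 := Nat.one_le_iff_ne_zero.1 hn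
  obtain ⟨z, hz⟩ := IsAlgClosed.exists_pow_nat_eq w (Nat.pos_of_ne_zero hn0)
  have hzlt : ‖z‖ < 1 := by
    rw [mem_ball_zero_iff] at hw
    by_contra hc
    push_neg at hc
    have : (1:ℝ) ≤ ‖z‖ ^ n := one_le_pow₀ hc
    rw [← norm_pow, hz] at this
    linarith
  set ω : ℂ := Complex.exp (2 * Real.pi * Complex.I / n) with hω
  have hprim : IsPrimitiveRoot ω n := Complex.isPrimitiveRoot_exp n hn0
  have hωabs : ‖ω‖ = 1 := by
    have h1 : ‖ω‖ ^ n = 1 := by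
      rw [← norm_pow, hprim.pow_eq_one, norm_one]
    have h2 : 0 ≤ ‖ω‖ := norm_nonneg _
    rcases lt_trichotomy (‖ω‖) 1 with h | h | h
    · have := pow_lt_one₀ h2 h hn0; linarith
    · exact h
    · have := one_lt_pow₀ h hn0; linarith
  have hmem : ∀ j : ℕ, (ω ^ j * z) ∈ ball (0:ℂ) 1 := by
    intro j
    rw [mem_ball_zero_iff, norm_mul, norm_pow, hωabs, one_pow, one_mul]
    exact hzlt
  have htot : HasSum (fun k : ℕ => ∑ j ∈ Finset.range n, a k * (ω ^ j * z) ^ k)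
      (∑ j ∈ Finset.range n, f (ω ^ j * z)) :=
    hasSum_sum (fun j _ => hsum _ (hmem j))
  have hgeom : ∀ k : ℕ, (∑ j ∈ Finset.range n, (ω ^ k) ^ j) = if n ∣ k then (n:ℂ) else 0 := by
    intro k
    by_cases hdvd : n ∣ k
    · rw [if_pos hdvd]
      have hone : ω ^ k = 1 := (hprim.pow_eq_one_iff_dvd k).2 hdvd
      simp [hone]
    · rw [if_neg hdvd]
      have hne : ω ^ k ≠ 1 := fun hc => hdvd ((hprim.pow_eq_one_iff_dvd k).1 hc)
      rw [geom_sum_eq hne]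
      have hpown : (ω ^ k) ^ n = 1 := by
        rw [← pow_mul, mul_comm, pow_mul, hprim.pow_eq_one, one_pow]
      rw [hpown]
      simp
  have heq : ∀ k, (∑ j ∈ Finset.range n, a k * (ω ^ j * z) ^ k)
      = if n ∣ k then (n:ℂ) * (a k * z ^ k) else 0 := by
    intro k
    have e1 : ∀ j, a k * (ω ^ j * z) ^ k = (ω ^ k) ^ j * (a k * z ^ k) := by
      intro j
      rw [mul_pow, ← pow_mul, ← pow_mul, mul_comm j k]
      ring
    rw [Finset.sum_congr rfl (fun j _ => e1 j), ← Finset.sum_mul, hgeom k]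
    split_ifs <;> simp
  have hncast : ((n:ℂ)) ≠ 0 := Nat.cast_ne_zero.2 hn0
  set S : ℂ := (↑n)⁻¹ * ∑ j ∈ Finset.range n, f (ω ^ j * z) with hSdef
  have htot' : HasSum (fun k : ℕ => if n ∣ k then a k * z ^ k else 0) S := by
    have h2 := htot.mul_left ((n:ℂ))⁻¹
    rw [show (fun k : ℕ => (↑n)⁻¹ * ∑ j ∈ Finset.range n, a k * (ω ^ j * z) ^ k)
        = fun k : ℕ => if n ∣ k then a k * z ^ k else 0 from ?_] at h2
    · exact h2
    · funext k
      rw [heq k]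
      split_ifs
      · rw [← mul_assoc, inv_mul_cancel₀ hncast, one_mul]
      · rw [mul_zero]
  have hreindex : HasSum (fun j : ℕ => a (j * n) * w ^ j) S := by
    have hinj : Function.Injective (fun j : ℕ => j * n) := fun p q h =>
      Nat.eq_of_mul_eq_mul_right (Nat.pos_of_ne_zero hn0) h
    have hsupp : ∀ k ∉ Set.range (fun j : ℕ => j * n),
        (if n ∣ k then a k * z ^ k else 0) = 0 := by
      intro k hk
      rw [if_neg]
      intro hdvd
      exact hk ⟨k / n, (Nat.div_mul_cancel hdvd)⟩
    have := (hinj.hasSum_iff hsupp).2 htot'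
    rw [show ((fun k : ℕ => if n ∣ k then a k * z ^ k else 0) ∘ fun j : ℕ => j * n)
        = fun j : ℕ => a (j * n) * w ^ j from ?_] at this
    · exact this
    · funext j
      simp only [Function.comp_apply]
      have hd : n ∣ j * n := Dvd.intro_left j rfl
      rw [if_pos hd, pow_mul', hz]
  refine ⟨S, ?_, hreindex⟩
  rw [hSdef, norm_mul]
  have habs1 : ‖((↑n:ℂ))⁻¹‖ = (↑n)⁻¹ := by
    rw [norm_inv, Complex.norm_natCast]
  rw [habs1]
  have habs2 : ‖∑ j ∈ Finset.range n, f (ω ^ j * z)‖ ≤ (n:ℝ) * s := by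
    refine le_trans (norm_sum_le _ _) ?_
    rw [show (n:ℝ) * s = ∑ _j ∈ Finset.range n, s by
      rw [Finset.sum_const, Finset.card_range, nsmul_eq_mul]]
    exact Finset.sum_le_sum (fun j _ => hb _ (hmem j))
  have hnpos : (0:ℝ) < n := by exact_mod_cast Nat.pos_of_ne_zero hn0
  calc (↑n)⁻¹ * ‖∑ j ∈ Finset.range n, f (ω ^ j * z)‖
      ≤ (↑n)⁻¹ * ((n:ℝ) * s) := by
        exact mul_le_mul_of_nonneg_left habs2 (by positivity)
    _ = s := by field_simp


lemma myOfScalars_coeff (c : ℕ → ℂ) (n : ℕ) :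
    (FormalMultilinearSeries.ofScalars ℂ c).coeff n = c n := by
  simp only [FormalMultilinearSeries.coeff, FormalMultilinearSeries.ofScalars,
    ContinuousMultilinearMap.smul_apply, ContinuousMultilinearMap.mkPiAlgebraFin_apply,
    smul_eq_mul]
  have : (List.ofFn (1 : Fin n → ℂ)).prod = 1 := by
    rw [show (1 : Fin n → ℂ) = fun _ => 1 from rfl]
    simp [List.ofFn_const, List.prod_replicate]
  rw [this, mul_one]

lemma myHasFPower (c : ℕ → ℂ) (H : ℂ → ℂ)
    (h : ∀ w ∈ ball (0:ℂ) 1, HasSum (fun j : ℕ => c j * w ^ j) (H w)) :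
    HasFPowerSeriesOnBall H (FormalMultilinearSeries.ofScalars ℂ c) 0 1 := by
  have hrad : 1 ≤ (FormalMultilinearSeries.ofScalars ℂ c).radius := by
    refine ENNReal.le_of_forall_nnreal_lt (fun ρ hρ => ?_)
    have hρ1 : (ρ : ℝ) < 1 := by exact_mod_cast hρ
    have hmem : ((ρ : ℝ) : ℂ) ∈ ball (0:ℂ) 1 := by
      simp only [Metric.mem_ball, dist_zero_right, Complex.norm_real, Real.norm_eq_abs]
      rwa [_root_.abs_of_nonneg ρ.coe_nonneg]
    have hsummable := (h _ hmem).summable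
    have hb : BddAbove (Set.range fun n => ‖c n * ((ρ:ℝ):ℂ) ^ n‖) :=
      hsummable.tendsto_atTop_zero.norm.bddAbove_range
    obtain ⟨C, hC⟩ := hb
    refine (FormalMultilinearSeries.ofScalars ℂ c).le_radius_of_bound C (fun n => ?_)
    have h1 : ‖c n * ((ρ:ℝ):ℂ) ^ n‖ ≤ C := hC ⟨n, rfl⟩
    have h2 : ‖c n * ((ρ:ℝ):ℂ) ^ n‖ = ‖c n‖ * (ρ:ℝ)^n := by
      rw [norm_mul, norm_pow, Complex.norm_real, Real.norm_eq_abs,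
        _root_.abs_of_nonneg ρ.coe_nonneg]
    rw [h2] at h1
    simpa only [FormalMultilinearSeries.ofScalars_norm] using h1
  refine ⟨hrad, by norm_num, fun {y} hy => ?_⟩
  have hy' : y ∈ ball (0:ℂ) 1 := by
    simpa [← ofReal_norm, Metric.mem_ball, dist_eq_norm] using hy
  have := h y hy'
  simp only [zero_add]
  simpa only [FormalMultilinearSeries.ofScalars_apply_eq, smul_eq_mul] using this

-- strict Möbius inequality in normSq form
lemma myNormSq_lt (A B : ℂ) (hA : Complex.normSq A < 1) (hB : Complex.normSq B < 1) :
    Complex.normSq (A - B) < Complex.normSq (1 - (starRingEnd ℂ) B * A) := by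
  have h1 : Complex.normSq (A - B)
      = Complex.normSq A + Complex.normSq B - 2 * (A * (starRingEnd ℂ) B).re :=
    Complex.normSq_sub A B
  have h2 : Complex.normSq (1 - (starRingEnd ℂ) B * A)
      = 1 + Complex.normSq B * Complex.normSq A - 2 * (A * (starRingEnd ℂ) B).re := by
    rw [Complex.normSq_sub]
    have e1 : Complex.normSq ((starRingEnd ℂ) B * A) = Complex.normSq B * Complex.normSq A := by
      rw [Complex.normSq_mul, Complex.normSq_conj]
    have e2 : ((1:ℂ) * (starRingEnd ℂ) ((starRingEnd ℂ) B * A)).re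
        = (A * (starRingEnd ℂ) B).re := by
      rw [one_mul, map_mul, Complex.conj_conj,
        show B * (starRingEnd ℂ) A = (starRingEnd ℂ) (A * (starRingEnd ℂ) B) by
          rw [map_mul, Complex.conj_conj, mul_comm], Complex.conj_re]
    rw [e1, e2, Complex.normSq_one]
  rw [h1, h2]
  nlinarith [hA, hB]

-- Schwarz-type bound
lemma myMobius (f : ℂ → ℂ) (hd : DifferentiableOn ℂ f (ball 0 1)) (s : ℝ) (hs : s < 1)
    (hb : ∀ w ∈ ball (0:ℂ) 1, ‖f w‖ ≤ s) (w : ℂ) (hw : w ∈ ball (0:ℂ) 1) :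
    ‖f w - f 0‖ ≤ ‖w‖ * ‖1 - (starRingEnd ℂ) (f 0) * f w‖ := by
  have h0 : (0:ℂ) ∈ ball (0:ℂ) 1 := by simp
  have hs0 : 0 ≤ s := le_trans (norm_nonneg _) (hb 0 h0)
  have habs : ∀ v ∈ ball (0:ℂ) 1, Complex.normSq (f v) < 1 := by
    intro v hv
    have := hb v hv
    have h2 : ‖f v‖ < 1 := lt_of_le_of_lt this hs
    rw [← Complex.sq_norm]
    nlinarith [norm_nonneg (f v)]
  have hden : ∀ v ∈ ball (0:ℂ) 1, 1 - (starRingEnd ℂ) (f 0) * f v ≠ 0 := by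
    intro v hv h
    have : Complex.normSq (f v - f 0) < Complex.normSq (1 - (starRingEnd ℂ) (f 0) * f v) :=
      myNormSq_lt _ _ (habs v hv) (habs 0 h0)
    rw [h] at this
    simp at this
    exact absurd this (not_lt.2 (Complex.normSq_nonneg _))
  set g : ℂ → ℂ := fun v => (f v - f 0) / (1 - (starRingEnd ℂ) (f 0) * f v) with hg
  have hgd : DifferentiableOn ℂ g (ball 0 1) := by
    apply DifferentiableOn.div
    · exact hd.sub_const _
    · exact (differentiableOn_const _).sub ((differentiableOn_const _).mul hd)
    · exact hden
  have hmaps : Set.MapsTo g (ball (0:ℂ) 1) (ball (0:ℂ) 1) := by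
    intro v hv
    rw [mem_ball_zero_iff]
    have hlt := myNormSq_lt _ _ (habs v hv) (habs 0 h0)
    have hpos : 0 < ‖1 - (starRingEnd ℂ) (f 0) * f v‖ :=
      norm_pos_iff.mpr (hden v hv)
    rw [hg]
    simp only [norm_div]
    rw [div_lt_one hpos]
    have := Real.sqrt_lt_sqrt (Complex.normSq_nonneg _) hlt
    rwa [← Complex.norm_def, ← Complex.norm_def] at this
  have hg0 : g 0 = 0 := by simp [hg]
  have hw1 : ‖w‖ < 1 := by rwa [mem_ball_zero_iff] at hw
  have hschwarz : ‖g w‖ ≤ ‖w‖ :=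
    Complex.norm_le_norm_of_mapsTo_ball hgd (hmaps.mono_right ball_subset_closedBall) hg0 hw1
  have heq : f w - f 0 = g w * (1 - (starRingEnd ℂ) (f 0) * f w) := by
    rw [hg]
    rw [div_mul_cancel₀ _ (hden w hw)]
  rw [heq, norm_mul]
  exact mul_le_mul_of_nonneg_right hschwarz (norm_nonneg _)

lemma myCoeffOne (c : ℕ → ℂ) (H : ℂ → ℂ) (s : ℝ) (hs : s < 1)
    (h : ∀ w ∈ ball (0:ℂ) 1, HasSum (fun j : ℕ => c j * w ^ j) (H w))
    (hb : ∀ w ∈ ball (0:ℂ) 1, ‖H w‖ ≤ s) :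
    ‖c 1‖ ≤ 1 - ‖c 0‖ ^ 2 := by
  have h0 : (0:ℂ) ∈ ball (0:ℂ) 1 := by simp
  have hs0 : 0 ≤ s := le_trans (norm_nonneg _) (hb 0 h0)
  have hp := myHasFPower c H h
  have hd : DifferentiableOn ℂ H (ball 0 1) := by
    intro v hv
    have hv' : v ∈ Metric.eball (0:ℂ) 1 := by
      rw [EMetric.mem_ball, edist_dist, ← ENNReal.ofReal_one]
      exact (ENNReal.ofReal_lt_ofReal_iff (by norm_num)).2 (by rwa [Metric.mem_ball] at hv)
    exact ((hp.analyticAt_of_mem hv').differentiableAt).differentiableWithinAt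
  have hH0 : H 0 = c 0 := by
    have h1 : HasSum (fun j : ℕ => c j * (0:ℂ) ^ j) (c 0) := by
      have := hasSum_single (f := fun j : ℕ => c j * (0:ℂ) ^ j) 0
        (by intro b hb; simp [zero_pow hb])
      simpa using this
    exact (h 0 h0).unique h1
  set t := ‖c 0‖ with ht
  have hts : t ≤ s := by rw [ht, ← hH0]; exact hb 0 h0
  have ht1 : t < 1 := lt_of_le_of_lt hts hs
  have ht0 : 0 ≤ t := norm_nonneg _
  -- derivative is c 1
  have hc1 : deriv H 0 = c 1 := by
    rw [hp.hasFPowerSeriesAt.deriv]; exact myOfScalars_coeff c 1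
  have hder : HasDerivAt H (c 1) 0 := by
    rw [← hc1]
    exact (hd.differentiableAt (isOpen_ball.mem_nhds h0)).hasDerivAt
  have hns : Complex.normSq (H 0) = t ^ 2 := by
    rw [← Complex.sq_norm, hH0, ht]
  -- slope bound
  have hkey : ∀ w ∈ ball (0:ℂ) 1, ‖H w - H 0‖ * (1 - t * ‖w‖)
      ≤ ‖w‖ * (1 - t ^ 2) := by
    intro w hw
    have h1 := myMobius H hd s hs hb w hw
    have h2 : ‖1 - (starRingEnd ℂ) (H 0) * H w‖
        ≤ (1 - t ^ 2) + t * ‖H w - H 0‖ := by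
      have e : 1 - (starRingEnd ℂ) (H 0) * H w
          = (1 - (Complex.normSq (H 0) : ℂ)) - (starRingEnd ℂ) (H 0) * (H w - H 0) := by
        rw [show ((Complex.normSq (H 0) : ℂ)) = (starRingEnd ℂ) (H 0) * H 0 by
          rw [mul_comm, Complex.mul_conj]]
        ring
      rw [e]
      refine le_trans (norm_sub_le _ _) ?_
      have e2 : ‖1 - (Complex.normSq (H 0) : ℂ)‖ = 1 - t ^ 2 := by
        rw [show (1 : ℂ) - (Complex.normSq (H 0) : ℂ) = ((1 - Complex.normSq (H 0) : ℝ) : ℂ) by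
          push_cast; ring, Complex.norm_real, Real.norm_eq_abs, hns, _root_.abs_of_nonneg (by nlinarith)]
      rw [e2, norm_mul, Complex.norm_conj, hH0, ← ht]
    have hw1 : ‖w‖ < 1 := by rwa [mem_ball_zero_iff] at hw
    nlinarith [norm_nonneg w, norm_nonneg (H w - H 0)]
  -- pass to the limit
  have hslope : ∀ᶠ w in 𝓝[≠] (0:ℂ), ‖slope H 0 w‖ ≤
      (1 - t ^ 2) / (1 - t * ‖w‖) := by
    have hball : ∀ᶠ w in 𝓝[≠] (0:ℂ), w ∈ ball (0:ℂ) 1 :=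
      eventually_nhdsWithin_of_eventually_nhds (isOpen_ball.eventually_mem h0)
    filter_upwards [hball, self_mem_nhdsWithin] with w hw hw0
    have hw1 : ‖w‖ < 1 := by rwa [mem_ball_zero_iff] at hw
    have hpos : 0 < 1 - t * ‖w‖ := by nlinarith [norm_nonneg w]
    have hwpos : 0 < ‖w‖ := norm_pos_iff.mpr hw0
    rw [slope_def_field, sub_zero, norm_div, div_le_div_iff₀ hwpos hpos]
    nlinarith [hkey w hw, norm_nonneg w, norm_nonneg (H w - H 0)]
  have hlim1 : Tendsto (fun w => ‖slope H 0 w‖) (𝓝[≠] (0:ℂ))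
      (𝓝 (‖c 1‖)) := by
    exact (continuous_norm.tendsto _).comp (hasDerivAt_iff_tendsto_slope.1 hder)
  have hlim2 : Tendsto (fun w => (1 - t ^ 2) / (1 - t * ‖w‖)) (𝓝[≠] (0:ℂ))
      (𝓝 (1 - t ^ 2)) := by
    have : Tendsto (fun w : ℂ => 1 - t * ‖w‖) (𝓝 (0:ℂ)) (𝓝 (1 - t * ‖(0:ℂ)‖)) :=
      (tendsto_const_nhds.sub (tendsto_const_nhds.mul (continuous_norm.tendsto (0:ℂ))))
    have h2 := (tendsto_const_nhds (x := (1 - t^2 : ℝ))).div this (by simp)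
    simpa [Pi.div_def] using h2.mono_left nhdsWithin_le_nhds
  rw [ht]
  exact le_of_tendsto_of_tendsto hlim1 hlim2 hslope

lemma myCore (f : ℂ → ℂ) (a : ℕ → ℂ)
    (hf : DifferentiableOn ℂ f (ball (0:ℂ) 1))
    (hsum : ∀ z ∈ ball (0:ℂ) 1, HasSum (fun k : ℕ => a k * z ^ k) (f z))
    (s : ℝ) (hs1 : s < 1)
    (hbound : ∀ z ∈ ball (0:ℂ) 1, ‖f z‖ ≤ s)
    (m N : ℕ) (hm : 1 ≤ m) (hN : 1 ≤ N)
    (r : ℝ) (hr0 : 0 ≤ r) (hr1 : r < 1)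
    (hroot : 2 * r ^ N * (1 + r ^ m) ≤ (1 - r) * (1 - r ^ m))
    (z : ℂ) (hz : ‖z‖ = r) :
    ‖f (z ^ m)‖ + ∑' k : ℕ, ‖a (N + k)‖ * r ^ (N + k) ≤ 1 := by
  have h0 : (0:ℂ) ∈ ball (0:ℂ) 1 := by simp
  have hs0 : 0 ≤ s := le_trans (norm_nonneg _) (hbound 0 h0)
  have hf0 : f 0 = a 0 := by
    refine (hsum 0 h0).unique ?_
    have := hasSum_single (f := fun j : ℕ => a j * (0:ℂ) ^ j) 0
      (by intro b hb0; simp [zero_pow hb0])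
    simpa using this
  set t := ‖a 0‖ with htdef
  have hts : t ≤ s := by rw [htdef, ← hf0]; exact hbound 0 h0
  have ht1 : t < 1 := lt_of_le_of_lt hts hs1
  have ht0 : 0 ≤ t := norm_nonneg _
  have hm0 : m ≠ 0 := Nat.one_le_iff_ne_zero.1 hm
  set ρ := r ^ m with hρdef
  have hρ0 : 0 ≤ ρ := pow_nonneg hr0 m
  have hρ1 : ρ < 1 := pow_lt_one₀ hr0 hr1 hm0
  have hzm_abs : ‖z ^ m‖ = ρ := by rw [norm_pow, hz]
  have hzm : z ^ m ∈ ball (0:ℂ) 1 := by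
    rw [mem_ball_zero_iff, hzm_abs]; exact hρ1
  set v := f (z ^ m) with hvdef
  set x := ‖v‖ with hxdef
  have hx0 : 0 ≤ x := norm_nonneg _
  -- point bound
  have hxineq : x * (1 + t * ρ) ≤ t + ρ := by
    have hmob := myMobius f hf s hs1 hbound (z ^ m) hzm
    rw [hzm_abs, hf0, ← hvdef] at hmob
    have hsq : Complex.normSq (v - a 0) ≤ ρ ^ 2 * Complex.normSq (1 - (starRingEnd ℂ) (a 0) * v) := by
      have h1 : ‖v - a 0‖ ^ 2 ≤ (ρ * ‖1 - (starRingEnd ℂ) (a 0) * v‖) ^ 2 := by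
        apply pow_le_pow_left₀ (norm_nonneg _) hmob
      rw [Complex.sq_norm] at h1
      rw [mul_pow] at h1
      rwa [Complex.sq_norm] at h1
    set u := (v * (starRingEnd ℂ) (a 0)).re with hudef
    have hns1 : Complex.normSq (v - a 0) = x ^ 2 - 2 * u + t ^ 2 := by
      rw [Complex.normSq_sub, ← Complex.sq_norm, ← Complex.sq_norm (a 0), ← hxdef, ← htdef, ← hudef]
      ring
    have hns2 : Complex.normSq (1 - (starRingEnd ℂ) (a 0) * v) = 1 - 2 * u + t ^ 2 * x ^ 2 := by
      rw [Complex.normSq_sub]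
      have e1 : Complex.normSq ((starRingEnd ℂ) (a 0) * v) = t ^ 2 * x ^ 2 := by
        rw [Complex.normSq_mul, Complex.normSq_conj, ← Complex.sq_norm, ← Complex.sq_norm v,
          ← htdef, ← hxdef]
      have e2 : ((1:ℂ) * (starRingEnd ℂ) ((starRingEnd ℂ) (a 0) * v)).re = u := by
        rw [one_mul, map_mul, Complex.conj_conj, hudef,
          show a 0 * (starRingEnd ℂ) v = (starRingEnd ℂ) (v * (starRingEnd ℂ) (a 0)) by
            rw [map_mul, Complex.conj_conj, mul_comm], Complex.conj_re]
      rw [e1, e2, Complex.normSq_one]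
      ring
    have hu : |u| ≤ t * x := by
      refine le_trans (Complex.abs_re_le_norm _) ?_
      rw [norm_mul, Complex.norm_conj, ← hxdef, ← htdef, mul_comm]
    refine myQuad t ρ x u ht0 ht1 hρ0 hρ1 hx0 hu ?_
    rw [hns1, hns2] at hsq
    linarith [hsq]
  -- Schur coefficient bounds
  have hcoef : ∀ k : ℕ, 1 ≤ k → ‖a k‖ ≤ 1 - t ^ 2 := by
    intro k hk
    set c : ℕ → ℂ := fun j => a (j * k) with hcdef
    set H : ℂ → ℂ := fun w => ∑' j : ℕ, c j * w ^ j with hHdef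
    have hH : ∀ w ∈ ball (0:ℂ) 1,
        HasSum (fun j : ℕ => c j * w ^ j) (H w) ∧ ‖H w‖ ≤ s := by
      intro w hw
      obtain ⟨S, hS1, hS2⟩ := myAvg f a hsum s hbound k hk w hw
      have hHe : H w = S := by rw [hHdef]; exact hS2.tsum_eq
      exact ⟨hHe ▸ hS2, hHe ▸ hS1⟩
    have := myCoeffOne c H s hs1 (fun w hw => (hH w hw).1) (fun w hw => (hH w hw).2)
    rw [hcdef] at this
    simpa [htdef] using this
  set T := ∑' k : ℕ, ‖a (N + k)‖ * r ^ (N + k) with hT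
  have hterm : ∀ k : ℕ, ‖a (N + k)‖ * r ^ (N + k) ≤ (1 - t ^ 2) * r ^ (N + k) := by
    intro k
    exact mul_le_mul_of_nonneg_right (hcoef _ (le_trans hN (Nat.le_add_right N k)))
      (pow_nonneg hr0 _)
  have hgeq : (fun k : ℕ => (1 - t ^ 2) * r ^ (N + k))
      = fun k : ℕ => ((1 - t ^ 2) * r ^ N) * r ^ k := by
    funext k; rw [pow_add]; ring
  have hgs : Summable (fun k : ℕ => (1 - t ^ 2) * r ^ (N + k)) := by
    rw [hgeq]
    exact (summable_geometric_of_lt_one hr0 hr1).mul_left _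
  have hTs : Summable (fun k : ℕ => ‖a (N + k)‖ * r ^ (N + k)) :=
    Summable.of_nonneg_of_le (fun k => by positivity) hterm hgs
  have hTle : T ≤ (1 - t ^ 2) * r ^ N * (1 - r)⁻¹ := by
    refine le_trans (Summable.tsum_le_tsum hterm hTs hgs) ?_
    rw [hgeq, tsum_mul_left, tsum_geometric_of_lt_one hr0 hr1]
  -- final arithmetic
  have h1tρ : (0:ℝ) < 1 + t * ρ := by nlinarith [mul_nonneg ht0 hρ0]
  have h1r : (0:ℝ) < 1 - r := by linarith
  have hxdiv : x ≤ (t + ρ) / (1 + t * ρ) := (le_div_iff₀ h1tρ).2 hxineq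
  have hTdiv : T ≤ (1 - t ^ 2) * r ^ N / (1 - r) := by
    rw [div_eq_mul_inv]; exact hTle
  have hmain : (t + ρ) / (1 + t * ρ) + (1 - t ^ 2) * r ^ N / (1 - r) ≤ 1 := by
    rw [div_add_div _ _ (ne_of_gt h1tρ) (ne_of_gt h1r), div_le_one (mul_pos h1tρ h1r)]
    have hrN : (0:ℝ) ≤ r ^ N := pow_nonneg hr0 N
    have hA : (1 + t) * (1 + t * ρ) ≤ 2 * (1 + ρ) := by
      nlinarith [mul_nonneg (show (0:ℝ) ≤ 1 - t by linarith) hρ0]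
    have hB := mul_le_mul_of_nonneg_left hA
      (mul_nonneg (show (0:ℝ) ≤ 1 - t by linarith) hrN)
    have hC := mul_le_mul_of_nonneg_left hroot (show (0:ℝ) ≤ 1 - t by linarith)
    nlinarith [hB, hC]
  linarith [hxdiv, hTdiv, hmain]

/-- Theorem 2: if `f` is analytic on the unit disk with `|f| ≤ 1`, `m, N ≥ 1`, and
`2r^N(1+r^m) ≤ (1-r)(1-r^m)`, then `|f(z^m)| + ∑_{k=N}^∞ |a_k| r^k ≤ 1` for `|z| = r`. -/
theorem bohr_rogosinski_radius_power (f : ℂ → ℂ) (a : ℕ → ℂ)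
    (hf : AnalyticOn ℂ f (ball (0:ℂ) 1))
    (hsum : ∀ z ∈ ball (0:ℂ) 1, HasSum (fun k : ℕ => a k * z ^ k) (f z))
    (hbound : ∀ z ∈ ball (0:ℂ) 1, ‖f z‖ ≤ 1)
    (m N : ℕ) (hm : 1 ≤ m) (hN : 1 ≤ N)
    (r : ℝ) (hr0 : 0 ≤ r) (hr1 : r < 1)
    (hroot : 2 * r ^ N * (1 + r ^ m) ≤ (1 - r) * (1 - r ^ m))
    (z : ℂ) (hz : ‖z‖ = r) :
    ‖f (z ^ m)‖ + ∑' k : ℕ, ‖a (N + k)‖ * r ^ (N + k) ≤ 1 := by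
  have hd : DifferentiableOn ℂ f (ball (0:ℂ) 1) := hf.differentiableOn
  have key : ∀ s : ℝ, 0 < s → s < 1 →
      s * (‖f (z ^ m)‖ + ∑' k : ℕ, ‖a (N + k)‖ * r ^ (N + k)) ≤ 1 := by
    intro s hs0 hs1
    have hds : DifferentiableOn ℂ (fun w => (s:ℂ) * f w) (ball (0:ℂ) 1) :=
      hd.const_mul _
    have hsums : ∀ w ∈ ball (0:ℂ) 1,
        HasSum (fun k : ℕ => ((s:ℂ) * a k) * w ^ k) ((s:ℂ) * f w) := by
      intro w hw
      simpa [mul_assoc] using (hsum w hw).mul_left (s:ℂ)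
    have hbs : ∀ w ∈ ball (0:ℂ) 1, ‖(s:ℂ) * f w‖ ≤ s := by
      intro w hw
      rw [norm_mul, Complex.norm_real, Real.norm_eq_abs, _root_.abs_of_nonneg hs0.le]
      calc s * ‖f w‖ ≤ s * 1 := mul_le_mul_of_nonneg_left (hbound w hw) hs0.le
        _ = s := mul_one s
    have hc := myCore (fun w => (s:ℂ) * f w) (fun k => (s:ℂ) * a k) hds hsums s hs1 hbs
      m N hm hN r hr0 hr1 hroot z hz
    have e1 : ‖(s:ℂ) * f (z ^ m)‖ = s * ‖f (z ^ m)‖ := by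
      rw [norm_mul, Complex.norm_real, Real.norm_eq_abs, _root_.abs_of_nonneg hs0.le]
    have e2 : ∀ k : ℕ, ‖(s:ℂ) * a (N + k)‖ * r ^ (N + k)
        = s * (‖a (N + k)‖ * r ^ (N + k)) := by
      intro k
      rw [norm_mul, Complex.norm_real, Real.norm_eq_abs, _root_.abs_of_nonneg hs0.le]
      ring
    simp only [e1] at hc
    rw [tsum_congr e2, tsum_mul_left] at hc
    rw [mul_add]
    exact hc
  set L := ‖f (z ^ m)‖ + ∑' k : ℕ, ‖a (N + k)‖ * r ^ (N + k) with hL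
  by_contra hcon
  push_neg at hcon
  have hL1 : 1 < L := hcon
  have hL0 : 0 < L := lt_trans one_pos hL1
  have hs0 : 0 < (1 / L + 1) / 2 := by positivity
  have hs1 : (1 / L + 1) / 2 < 1 := by
    have : 1 / L < 1 := by rw [div_lt_one hL0]; exact hL1
    linarith
  have hkey := key _ hs0 hs1
  have hcancel : (1 / L) * L = 1 := one_div_mul_cancel (ne_of_gt hL0)
  nlinarith [hkey, hcancel]
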